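/- Let T be an m-dimensional linear subspace of ℝ^d with orthogonal complement T^⊥, let ĉ, c̃ ∈ ℝ^d with ‖c̃ − ĉ‖ ≤ μ, and let N be a (d − m)-dimensional affine flat passing through c̃ such that every unit vector u in the direction space of N satisfies dist(u, T^⊥) ≤ sin α, for some α ∈ [0, π/2). Then every point x in the intersection of N with the affine flat ĉ + T satisfies (1) ‖c̃ − x‖ ≤ μ/cos α and (2) ‖ĉ − x‖ ≤ (1 + 1/cos α)·μ. -/

import Mathlib

noncomputable section

set_option maxHeartbeats 1600000 in
/-- If `N` is a `(d-m)`-flat through `c̃` making an angle at most `α < π/2` with the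
orthogonal complement `T^⊥` of an `m`-dimensional subspace `T`, and `‖c̃ - ĉ‖ ≤ μ`, then
every point `x` of `N ∩ (ĉ + T)` satisfies `‖c̃ - x‖ ≤ μ / cos α` and
`‖ĉ - x‖ ≤ (1 + 1/cos α) μ`. -/
theorem flat_meets_tangent_flat_nearby
    (d m : ℕ) (hm : m ≤ d)
    (T : Submodule ℝ (EuclideanSpace ℝ (Fin d)))
    (hT : Module.finrank ℝ T = m)
    (chat ctil : EuclideanSpace ℝ (Fin d)) (μ : ℝ) (hμ : ‖ctil - chat‖ ≤ μ)
    (α : ℝ) (hα0 : 0 ≤ α) (hα1 : α < Real.pi / 2)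
    (N : AffineSubspace ℝ (EuclideanSpace ℝ (Fin d))) (hctil : ctil ∈ N)
    (hNdim : Module.finrank ℝ N.direction = d - m)
    (hangle : ∀ u ∈ N.direction, ‖u‖ = 1 →
      Metric.infDist u ((Tᗮ : Submodule ℝ (EuclideanSpace ℝ (Fin d))) :
        Set (EuclideanSpace ℝ (Fin d))) ≤ Real.sin α) :
    ∀ x ∈ N, x - chat ∈ T →
      ‖ctil - x‖ ≤ μ / Real.cos α ∧ ‖chat - x‖ ≤ (1 + 1 / Real.cos α) * μ := by
  intro x hx hxT
  have hμ0 : 0 ≤ μ := le_trans (norm_nonneg _) hμ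
  have hcos : 0 < Real.cos α :=
    Real.cos_pos_of_mem_Ioo ⟨by linarith [Real.pi_pos], hα1⟩
  have hsin0 : 0 ≤ Real.sin α := Real.sin_nonneg_of_nonneg_of_le_pi hα0
    (by linarith [Real.pi_pos])
  set v : EuclideanSpace ℝ (Fin d) := ctil - x with hvdef
  have hv : v ∈ N.direction := by
    have := AffineSubspace.vsub_mem_direction hctil hx
    simpa using this
  -- key : projection of v onto T is small
  have hkey : ‖(Submodule.orthogonalProjectionOnto T v : EuclideanSpace ℝ (Fin d))‖ ≤ Real.sin α * ‖v‖ := by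
    rcases eq_or_ne v 0 with hv0 | hv0
    · simp [hv0]
    · set u : EuclideanSpace ℝ (Fin d) := ‖v‖⁻¹ • v with hudef
      have hvnorm : 0 < ‖v‖ := norm_pos_iff.mpr hv0
      have hu1 : ‖u‖ = 1 := by
        rw [hudef, norm_smul, norm_inv, norm_norm, inv_mul_cancel₀ (ne_of_gt hvnorm)]
      have huN : u ∈ N.direction := Submodule.smul_mem _ _ hv
      have hud : Metric.infDist u ((Tᗮ : Submodule ℝ (EuclideanSpace ℝ (Fin d))) :
          Set (EuclideanSpace ℝ (Fin d))) ≤ Real.sin α := hangle u huN hu1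
      have hlow : ‖(Submodule.orthogonalProjectionOnto T u : EuclideanSpace ℝ (Fin d))‖ ≤
          Metric.infDist u ((Tᗮ : Submodule ℝ (EuclideanSpace ℝ (Fin d))) :
            Set (EuclideanSpace ℝ (Fin d))) := by
        have hne : Nonempty ((Tᗮ : Submodule ℝ (EuclideanSpace ℝ (Fin d))) :
            Set (EuclideanSpace ℝ (Fin d))) := ⟨⟨0, Submodule.zero_mem _⟩⟩
        rw [Metric.infDist_eq_iInf]
        apply le_ciInf
        rintro ⟨y, hy⟩
        have hPy : Submodule.orthogonalProjectionOnto T y = 0 :=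
          Submodule.orthogonalProjectionOnto_apply_of_mem_orthogonal hy
        have heq : (Submodule.orthogonalProjectionOnto T u : EuclideanSpace ℝ (Fin d)) =
            Submodule.orthogonalProjectionOnto T (u - y) := by
          rw [map_sub, hPy]; simp
        rw [heq, dist_eq_norm]
        have h2 := (Submodule.orthogonalProjectionOnto T).le_opNorm (u - y)
        have h1 := Submodule.orthogonalProjectionOnto_norm_le T
        have h3 : ‖(Submodule.orthogonalProjectionOnto T (u - y) : EuclideanSpace ℝ (Fin d))‖ =
            ‖Submodule.orthogonalProjectionOnto T (u - y)‖ := rfl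
        rw [h3]
        nlinarith [norm_nonneg (u - y)]
      have hle : ‖(Submodule.orthogonalProjectionOnto T u : EuclideanSpace ℝ (Fin d))‖ ≤ Real.sin α :=
        le_trans hlow hud
      have hPu : (Submodule.orthogonalProjectionOnto T u : EuclideanSpace ℝ (Fin d)) =
          ‖v‖⁻¹ • (Submodule.orthogonalProjectionOnto T v : EuclideanSpace ℝ (Fin d)) := by
        rw [hudef, map_smul]; rfl
      rw [hPu, norm_smul, norm_inv, norm_norm] at hle
      calc ‖(Submodule.orthogonalProjectionOnto T v : EuclideanSpace ℝ (Fin d))‖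
          = ‖v‖ * (‖v‖⁻¹ * ‖(Submodule.orthogonalProjectionOnto T v : EuclideanSpace ℝ (Fin d))‖) := by
            field_simp
        _ ≤ ‖v‖ * Real.sin α := mul_le_mul_of_nonneg_left hle (le_of_lt hvnorm)
        _ = Real.sin α * ‖v‖ := mul_comm _ _
  -- the orthogonal component of v is controlled by μ
  have hperp : ‖(Submodule.orthogonalProjectionOnto Tᗮ v : EuclideanSpace ℝ (Fin d))‖ ≤ μ := by
    have hsplit : v = (ctil - chat) - (x - chat) := by
      rw [hvdef]; abel
    have hPx : Submodule.orthogonalProjectionOnto Tᗮ (x - chat) = 0 :=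
      Submodule.orthogonalProjectionOnto_orthogonal_apply_eq_zero hxT
    have heq : (Submodule.orthogonalProjectionOnto Tᗮ v : EuclideanSpace ℝ (Fin d)) =
        Submodule.orthogonalProjectionOnto Tᗮ (ctil - chat) := by
      rw [hsplit, map_sub, hPx]; simp
    rw [heq]
    have h2 := (Submodule.orthogonalProjectionOnto Tᗮ).le_opNorm (ctil - chat)
    have h1 := Submodule.orthogonalProjectionOnto_norm_le (Tᗮ : Submodule ℝ (EuclideanSpace ℝ (Fin d)))
    have h3 : ‖(Submodule.orthogonalProjectionOnto Tᗮ (ctil - chat) : EuclideanSpace ℝ (Fin d))‖ =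
        ‖Submodule.orthogonalProjectionOnto Tᗮ (ctil - chat)‖ := rfl
    rw [h3]
    nlinarith [norm_nonneg (ctil - chat)]
  have hpyth : ‖v‖ ^ 2 = ‖(Submodule.orthogonalProjectionOnto T v : EuclideanSpace ℝ (Fin d))‖ ^ 2 +
      ‖(Submodule.orthogonalProjectionOnto Tᗮ v : EuclideanSpace ℝ (Fin d))‖ ^ 2 :=
    Submodule.norm_sq_eq_add_norm_sq_projection v T
  have hsincos : Real.sin α ^ 2 + Real.cos α ^ 2 = 1 := Real.sin_sq_add_cos_sq α
  have hvle : ‖v‖ ≤ μ / Real.cos α := by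
    rw [le_div_iff₀ hcos]
    nlinarith [norm_nonneg v,
      norm_nonneg (Submodule.orthogonalProjectionOnto Tᗮ v : EuclideanSpace ℝ (Fin d)),
      norm_nonneg (Submodule.orthogonalProjectionOnto T v : EuclideanSpace ℝ (Fin d))]
  refine ⟨hvle, ?_⟩
  have htri : ‖chat - x‖ ≤ ‖chat - ctil‖ + ‖ctil - x‖ := by
    have h : chat - x = (chat - ctil) + (ctil - x) := by abel
    rw [h]; exact norm_add_le _ _
  have h1 : ‖chat - ctil‖ = ‖ctil - chat‖ := norm_sub_rev _ _
  have h2 : ‖chat - x‖ ≤ μ + μ / Real.cos α := by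
    rw [h1] at htri
    have : ‖ctil - x‖ ≤ μ / Real.cos α := hvle
    linarith
  calc ‖chat - x‖ ≤ μ + μ / Real.cos α := h2
    _ = (1 + 1 / Real.cos α) * μ := by field_simp
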